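/- Let G be a compact group, π an irreducible unitary representation on a finite dimensional Hilbert space H, and A an abelian subalgebra of End(H) normalized by π(G) with trivial nilradical. Then the distinct joint eigenspaces H_λ, λ ∈ Λ, of A are pairwise orthogonal with respect to the inner product of H. -/

import Mathlib

set_option synthInstance.maxHeartbeats 1000000

open scoped InnerProductSpace

set_option maxHeartbeats 2000000


set_option maxHeartbeats 2000000
set_option synthInstance.maxHeartbeats 1000000

open scoped InnerProductSpace

noncomputable section AuxJE

variable {H : Type*} [NormedAddCommGroup H] [InnerProductSpace ℂ H] [FiniteDimensional ℂ H]


lemma existsAvoid {V : Type*} [AddCommGroup V] [Module ℂ V]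
    {s : Set (V →ₗ[ℂ] ℂ)} (hs : s.Finite) (h0 : ∀ φ ∈ s, φ ≠ 0) :
    ∃ x : V, ∀ φ ∈ s, φ x ≠ 0 := by
  classical
  revert h0
  refine Set.Finite.induction_on (motive := fun s _ => (∀ φ ∈ s, φ ≠ 0) → ∃ x : V, ∀ φ ∈ s, φ x ≠ 0)
    s hs (fun _ => ⟨0, fun φ h => absurd h (Set.notMem_empty φ)⟩) ?_
  clear hs s
  intro φ t hφt htfin ih h0
  · 
    obtain ⟨x, hx⟩ := ih (fun ψ hψ => h0 ψ (Set.mem_insert_of_mem _ hψ))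
    have hφ : φ ≠ 0 := h0 φ (Set.mem_insert _ _)
    obtain ⟨y, hy⟩ : ∃ y, φ y ≠ 0 := by
      by_contra hc
      push_neg at hc
      exact hφ (LinearMap.ext fun z => hc z)
    -- bad set of scalars
    have hfin : ∀ ψ ∈ insert φ t, ({c : ℂ | ψ x + c * ψ y = 0}).Finite := by
      intro ψ hψ
      rcases eq_or_ne (ψ y) 0 with h | h
      · rcases Set.mem_insert_iff.mp hψ with rfl | hψt
        · -- ψ = φ, but φ y ≠ 0, contradiction with h
          exact absurd h hy
        · refine Set.Finite.subset (Set.finite_empty) ?_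
          intro c hc
          simp only [Set.mem_setOf_eq, h, mul_zero, add_zero] at hc
          exact absurd hc (hx ψ hψt)
      · refine Set.Finite.subset (Set.finite_singleton (-(ψ x) / (ψ y))) ?_
        intro c hc
        simp only [Set.mem_setOf_eq] at hc
        have : c * ψ y = -(ψ x) := by linear_combination hc
        simp only [Set.mem_singleton_iff]
        field_simp [h]
        linear_combination this
    have hbad : (⋃ ψ ∈ insert φ t, {c : ℂ | ψ x + c * ψ y = 0}).Finite :=
      Set.Finite.biUnion (htfin.insert φ) hfin
    obtain ⟨c, hc⟩ := hbad.infinite_compl.nonempty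
    refine ⟨x + c • y, ?_⟩
    intro ψ hψ
    have : c ∉ {c : ℂ | ψ x + c * ψ y = 0} := fun hmem => hc (Set.mem_biUnion hψ hmem)
    simpa [map_add, map_smul, smul_eq_mul] using this



lemma lambdaFinite (A : Subalgebra ℂ (H →L[ℂ] H)) :
    {l' : ↥A →ₗ[ℂ] ℂ | ∃ x : H, x ≠ 0 ∧ ∀ T : ↥A, (T : H →L[ℂ] H) x = l' T • x}.Finite := by
  classical
  haveI : FiniteDimensional ℂ ↥A := inferInstance
  set n := Module.finrank ℂ ↥A
  set b : Module.Basis (Fin n) ℂ ↥A := Module.finBasis ℂ ↥A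
  set Ev : (↥A →ₗ[ℂ] ℂ) → (Fin n → ℂ) := fun l' i => l' (b i) with hEv
  have hinj : Function.Injective Ev := by
    intro l₁ l₂ h
    exact b.ext fun i => congrFun h i
  set S : Fin n → Set ℂ := fun i =>
    Module.End.HasEigenvalue (((b i : ↥A) : H →L[ℂ] H) : H →ₗ[ℂ] H) with hS
  have hSfin : ∀ i, (S i).Finite := fun i => Module.End.finite_hasEigenvalue _
  refine Set.Finite.preimage hinj.injOn (Set.Finite.pi (fun i => hSfin i) :
    (Set.pi Set.univ S).Finite) |>.subset ?_
  intro l' hl'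
  obtain ⟨x, hx0, hx⟩ := hl'
  intro i _
  exact Module.End.hasEigenvalue_of_hasEigenvector
    ⟨(Module.End.mem_eigenspace_iff).mpr (hx (b i)), hx0⟩


open Module Module.End DirectSum



open scoped InnerProductSpace

lemma existsP (f : Module.End ℂ H) :
    ∃ P : H →L[ℂ] H,
      (∀ (α β : ℂ) (a b : H), α ≠ β → a ∈ f.maxGenEigenspace α → b ∈ f.maxGenEigenspace β →
        ⟪a, P b⟫_ℂ = 0) ∧
      (∀ x : H, x ≠ 0 → ∃ r : ℝ, 0 < r ∧ ⟪x, P x⟫_ℂ = (r : ℂ)) := by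
  classical
  set ℳ : ℂ → Submodule ℂ H := f.maxGenEigenspace with hℳ
  have hint : DirectSum.IsInternal ℳ :=
    DirectSum.isInternal_submodule_of_iSupIndep_of_iSup_eq_top
      f.independent_maxGenEigenspace f.iSup_maxGenEigenspace_eq_top
  set e : H ≃ₗ[ℂ] ⨁ μ : ℂ, ℳ μ := (LinearEquiv.ofBijective (DirectSum.coeLinearMap ℳ) hint).symm
    with he
  set pr : ℂ → (H →ₗ[ℂ] H) := fun μ =>
    (ℳ μ).subtype ∘ₗ (DirectSum.component ℂ ℂ (fun μ => ℳ μ) μ) ∘ₗ (e : H →ₗ[ℂ] _) with hpr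
  have hpr_apply : ∀ (μ : ℂ) (x : H), pr μ x = ((e x) μ : H) := fun μ x => rfl
  have hpr_mem : ∀ (α : ℂ), ∀ a ∈ ℳ α, ∀ μ, pr μ a = if μ = α then a else 0 := by
    intro α a ha μ
    rw [hpr_apply]
    by_cases h : μ = α
    · subst h
      rw [if_pos rfl]
      exact congrArg Subtype.val (hint.ofBijective_coeLinearMap_of_mem ha)
    · rw [if_neg h]
      have := hint.ofBijective_coeLinearMap_of_mem_ne (Ne.symm h) ha
      exact (congrArg Subtype.val this).trans rfl
  have hne : (minpoly ℂ f) ≠ 0 := minpoly.ne_zero (Algebra.IsIntegral.isIntegral f)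
  set E : Finset ℂ := (minpoly ℂ f).roots.toFinset with hE
  have hEmem : ∀ μ : ℂ, ℳ μ ≠ ⊥ → μ ∈ E := by
    intro μ hμ
    have h1 : f.HasEigenvalue μ := by
      have : f.HasUnifEigenvalue μ ⊤ := hμ
      exact (Module.End.hasUnifEigenvalue_iff_hasUnifEigenvalue_one (by simp)).mp this
    have h2 := (Module.End.hasEigenvalue_iff_isRoot).mp h1
    rw [hE, Multiset.mem_toFinset, Polynomial.mem_roots hne]
    exact h2
  set Pl : H →ₗ[ℂ] H := ∑ μ ∈ E, (LinearMap.adjoint (pr μ)) ∘ₗ (pr μ) with hPl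
  have hPapp : ∀ x, (LinearMap.toContinuousLinearMap Pl) x = Pl x := fun x => rfl
  have key : ∀ x y : H, ⟪x, (LinearMap.toContinuousLinearMap Pl) y⟫_ℂ
      = ∑ μ ∈ E, ⟪pr μ x, pr μ y⟫_ℂ := by
    intro x y
    rw [hPapp, hPl, LinearMap.sum_apply, inner_sum]
    refine Finset.sum_congr rfl fun μ _ => ?_
    simp only [LinearMap.coe_comp, Function.comp_apply]
    rw [LinearMap.adjoint_inner_right]
  refine ⟨LinearMap.toContinuousLinearMap Pl, ?_, ?_⟩
  · intro α β a b hab ha hb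
    rw [key]
    refine Finset.sum_eq_zero fun μ _ => ?_
    rw [hpr_mem α a ha μ, hpr_mem β b hb μ]
    by_cases h : μ = α
    · subst h
      rw [if_pos rfl, if_neg hab]
      simp
    · rw [if_neg h]; simp
  · intro x hx
    have hex : ∃ μ, e x μ ≠ 0 := by
      by_contra hc
      push_neg at hc
      exact hx ((LinearEquiv.map_eq_zero_iff e).mp (DFinsupp.ext fun μ => hc μ))
    obtain ⟨μ₀, hμ₀⟩ := hex
    have hprx : pr μ₀ x ≠ 0 := by
      rw [hpr_apply]
      exact fun hc => hμ₀ (Subtype.ext hc)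
    have hmem : pr μ₀ x ∈ ℳ μ₀ := by rw [hpr_apply]; exact ((e x) μ₀).2
    have hμ₀E : μ₀ ∈ E :=
      hEmem μ₀ (fun hbot => hprx ((Submodule.eq_bot_iff _).mp hbot _ hmem))
    refine ⟨∑ μ ∈ E, ‖pr μ x‖ ^ 2, ?_, ?_⟩
    · exact Finset.sum_pos' (fun μ _ => by positivity)
        ⟨μ₀, hμ₀E, pow_pos (norm_pos_iff.mpr hprx) 2⟩
    · rw [key, Complex.ofReal_sum]
      refine Finset.sum_congr rfl fun μ _ => ?_
      rw [inner_self_eq_norm_sq_to_K]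
      norm_cast
end AuxJE


open MeasureTheory

/-- Let `π` be a continuous irreducible unitary representation of a compact group
`G` on a finite dimensional complex Hilbert space `H`, and `A` an abelian
subalgebra of `End(H)` normalized by `π(G)` with trivial nilradical.  Then the
distinct joint eigenspaces of `A` are pairwise orthogonal. -/
theorem jointEigenspaces_orthogonal
    (G : Type*) [Group G] [TopologicalSpace G] [IsTopologicalGroup G] [CompactSpace G]
    (H : Type*) [NormedAddCommGroup H] [InnerProductSpace ℂ H] [FiniteDimensional ℂ H]
    (π : G →* unitary (H →L[ℂ] H))
    (hcont : Continuous fun g : G => (π g : H →L[ℂ] H))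
    (hirr : ∀ U : Submodule ℂ H, (∀ g : G, ∀ v ∈ U, (π g : H →L[ℂ] H) v ∈ U) →
      U = ⊥ ∨ U = ⊤)
    (A : Subalgebra ℂ (H →L[ℂ] H))
    (habelian : ∀ S ∈ A, ∀ T ∈ A, S * T = T * S)
    (hnorm : ∀ g : G,
      (fun T : H →L[ℂ] H => (π g : H →L[ℂ] H) * T * ((π g)⁻¹ : unitary (H →L[ℂ] H))) '' A = A)
    (hred : ∀ T ∈ A, IsNilpotent T → T = 0) :
    ∀ l m : A →ₗ[ℂ] ℂ, l ≠ m → ∀ v w : H,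
      (∀ T : A, (T : H →L[ℂ] H) v = l T • v) →
      (∀ T : A, (T : H →L[ℂ] H) w = m T • w) →
      ⟪v, w⟫_ℂ = 0 := by
  classical
  intro l m hlm v w hv hw
  by_cases hv0 : v = 0
  · simp [hv0]
  by_cases hw0 : w = 0
  · simp [hw0]
  -- basic unitary facts
  set U : G → (H →L[ℂ] H) := fun g => (π g : H →L[ℂ] H) with hU
  have hUmul : ∀ g h : G, U (g * h) = U g * U h := by
    intro g h; simp only [hU, map_mul]; rfl
  have hUone : U 1 = 1 := by simp only [hU, map_one]; rfl
  have hUinv_coe : ∀ g : G, (((π g)⁻¹ : unitary (H →L[ℂ] H)) : H →L[ℂ] H) = U g⁻¹ := by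
    intro g; rw [← map_inv]
  have hUgginv : ∀ g : G, U g * U g⁻¹ = 1 := by
    intro g; rw [← hUmul, mul_inv_cancel, hUone]
  have hUginvg : ∀ g : G, U g⁻¹ * U g = 1 := by
    intro g; rw [← hUmul, inv_mul_cancel, hUone]
  have hUcancel : ∀ (g : G) (x : H), U g (U g⁻¹ x) = x := by
    intro g x
    have := congrArg (fun T : H →L[ℂ] H => T x) (hUgginv g)
    simpa using this
  have hUcancel' : ∀ (g : G) (x : H), U g⁻¹ (U g x) = x := by
    intro g x
    have := congrArg (fun T : H →L[ℂ] H => T x) (hUginvg g)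
    simpa using this
  have hUinner : ∀ (g : G) (x y : H), ⟪U g x, U g y⟫_ℂ = ⟪x, y⟫_ℂ := by
    intro g x y
    have h1 : star (U g) * U g = 1 := Unitary.star_mul_self_of_mem (π g).2
    rw [← ContinuousLinearMap.adjoint_inner_right]
    rw [ContinuousLinearMap.star_eq_adjoint] at h1
    have h2 : (ContinuousLinearMap.adjoint (U g)) (U g y)
        = ((ContinuousLinearMap.adjoint (U g)) * U g) y := rfl
    rw [h2, h1, ContinuousLinearMap.one_apply]
  -- the conjugation action on A
  have hmemA : ∀ (g : G) (T : ↥A), U g * (T : H →L[ℂ] H) * U g⁻¹ ∈ A := by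
    intro g T
    have h1 : U g * (T : H →L[ℂ] H) * (((π g)⁻¹ : unitary (H →L[ℂ] H)) : H →L[ℂ] H)
        ∈ (A : Set (H →L[ℂ] H)) := by
      rw [← hnorm g]
      exact ⟨(T : H →L[ℂ] H), T.2, rfl⟩
    rwa [hUinv_coe g] at h1
  set κ : G → (↥A →ₗ[ℂ] ↥A) := fun g =>
    LinearMap.codRestrict (Subalgebra.toSubmodule A)
      (((LinearMap.mulRight ℂ (U g⁻¹)).comp (LinearMap.mulLeft ℂ (U g))).comp
        (Subalgebra.toSubmodule A).subtype)
      (fun T => hmemA g T) with hκ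
  have hκval : ∀ (g : G) (T : ↥A), ((κ g T : ↥A) : H →L[ℂ] H)
      = U g * (T : H →L[ℂ] H) * U g⁻¹ := fun g T => rfl
  have hκsurj : ∀ (g : G) (T : ↥A), ∃ S : ↥A, κ g S = T := by
    intro g T
    have h1 : (T : H →L[ℂ] H) ∈ (A : Set (H →L[ℂ] H)) := T.2
    rw [← hnorm g] at h1
    obtain ⟨R, hR, hRe⟩ := h1
    refine ⟨⟨R, hR⟩, Subtype.ext ?_⟩
    rw [hκval]
    rw [hUinv_coe g] at hRe
    exact hRe
  -- eigenvector transport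
  have htrans : ∀ (g : G) (x : H) (lx : ↥A →ₗ[ℂ] ℂ),
      (∀ T : ↥A, (T : H →L[ℂ] H) x = lx T • x) →
      ∀ T : ↥A, (T : H →L[ℂ] H) (U g⁻¹ x) = (lx.comp (κ g)) T • (U g⁻¹ x) := by
    intro g x lx hx T
    have h1 : (U g * (T : H →L[ℂ] H) * U g⁻¹) x = lx (κ g T) • x := by
      rw [← hκval g T]; exact hx (κ g T)
    have h2 : U g ((T : H →L[ℂ] H) (U g⁻¹ x)) = lx (κ g T) • x := by
      simpa [ContinuousLinearMap.mul_apply] using h1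
    have h3 := congrArg (fun y => U g⁻¹ y) h2
    simpa [hUcancel', _root_.map_smul] using h3
  -- the functionals l ∘ κ g and m ∘ κ g
  have hlg_ne : ∀ g : G, l.comp (κ g) ≠ m.comp (κ g) := by
    intro g heq
    apply hlm
    apply LinearMap.ext
    intro T
    obtain ⟨S, hS⟩ := hκsurj g T
    have := congrArg (fun f : ↥A →ₗ[ℂ] ℂ => f S) heq
    simpa [hS] using this
  -- the set Λ of joint eigenfunctionals
  set Λ : Set (↥A →ₗ[ℂ] ℂ) :=
    {l' : ↥A →ₗ[ℂ] ℂ | ∃ x : H, x ≠ 0 ∧ ∀ T : ↥A, (T : H →L[ℂ] H) x = l' T • x} with hΛ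
  have hΛfin : Λ.Finite := lambdaFinite A
  have hUna : ∀ (g : G) (x : H), x ≠ 0 → U g⁻¹ x ≠ 0 := by
    intro g x hx h0
    exact hx (by rw [← hUcancel g x, h0, map_zero])
  have hlgΛ : ∀ g : G, l.comp (κ g) ∈ Λ :=
    fun g => ⟨U g⁻¹ v, hUna g v hv0, htrans g v l hv⟩
  have hmgΛ : ∀ g : G, m.comp (κ g) ∈ Λ :=
    fun g => ⟨U g⁻¹ w, hUna g w hw0, htrans g w m hw⟩
  -- choose T₀ separating all pairs of distinct elements of Λ
  set D : Set (↥A →ₗ[ℂ] ℂ) :=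
    (fun p : (↥A →ₗ[ℂ] ℂ) × (↥A →ₗ[ℂ] ℂ) => p.1 - p.2) '' ((Λ ×ˢ Λ) ∩ {p | p.1 ≠ p.2}) with hD
  have hDfin : D.Finite := ((hΛfin.prod hΛfin).inter_of_left _).image _
  have hDne : ∀ φ ∈ D, φ ≠ 0 := by
    rintro φ ⟨⟨p1, p2⟩, ⟨-, hne⟩, rfl⟩
    exact sub_ne_zero.mpr hne
  obtain ⟨T₀, hT₀⟩ := existsAvoid hDfin hDne
  -- the operator P from the generalized eigenspace decomposition of T₀
  set f : Module.End ℂ H := ((T₀ : H →L[ℂ] H) : H →ₗ[ℂ] H) with hf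
  obtain ⟨P, hPzero, hPpos⟩ := existsP f
  -- membership of transported eigenvectors in generalized eigenspaces
  have hmemgen : ∀ (x : H) (lx : ↥A →ₗ[ℂ] ℂ),
      (∀ T : ↥A, (T : H →L[ℂ] H) x = lx T • x) → x ∈ f.maxGenEigenspace (lx T₀) := by
    intro x lx hx
    have h1 : x ∈ f.eigenspace (lx T₀) := by
      rw [Module.End.mem_eigenspace_iff]
      exact hx T₀
    exact (f.genEigenspace (lx T₀)).monotone le_top h1
  have hαβ : ∀ g : G, (l.comp (κ g)) T₀ ≠ (m.comp (κ g)) T₀ := by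
    intro g heq
    have hmem : (l.comp (κ g)) - (m.comp (κ g)) ∈ D :=
      ⟨(l.comp (κ g), m.comp (κ g)), ⟨⟨hlgΛ g, hmgΛ g⟩, hlg_ne g⟩, rfl⟩
    exact hT₀ _ hmem (by simpa [LinearMap.sub_apply, sub_eq_zero] using heq)
  have hkey : ∀ g : G, ⟪U g⁻¹ v, P (U g⁻¹ w)⟫_ℂ = 0 := by
    intro g
    exact hPzero _ _ _ _ (hαβ g)
      (hmemgen (U g⁻¹ v) (l.comp (κ g)) (htrans g v l hv))
      (hmemgen (U g⁻¹ w) (m.comp (κ g)) (htrans g w m hw))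
  -- Haar measure
  letI : MeasurableSpace G := borel G
  haveI : BorelSpace G := ⟨rfl⟩
  set μ : Measure G := Measure.haar with hμ
  -- averaged operator
  set F : G → (H →L[ℂ] H) := fun g => U g * P * U g⁻¹ with hF
  have hUcont : Continuous U := hcont
  have hUinvcont : Continuous (fun g => U g⁻¹) := hUcont.comp continuous_inv
  have hFcont : Continuous F := (hUcont.mul continuous_const).mul hUinvcont
  have hFint : Integrable F μ :=
    hFcont.integrable_of_hasCompactSupport (HasCompactSupport.of_compactSpace F)
  set S : H →L[ℂ] H := ∫ g, F g ∂μ with hS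
  -- inner products against S are integrals
  have hSapp : ∀ x y : H, ⟪x, S y⟫_ℂ = ∫ g, ⟪x, F g y⟫_ℂ ∂μ := by
    intro x y
    have := ((innerSL ℂ x).comp (ContinuousLinearMap.apply ℂ H y)).integral_comp_comm hFint
    simpa using this.symm
  -- S commutes with the representation
  have hcomm : ∀ h : G, U h * S = S * U h := by
    intro h
    have h1 : U h * S * U h⁻¹ = S := by
      have h2 := (ContinuousLinearMap.mulLeftRight ℂ (H →L[ℂ] H) (U h)
        (U h⁻¹)).integral_comp_comm hFint
      have h3 : ∀ g : G, U h * F g * U h⁻¹ = F (h * g) := by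
        intro g
        simp only [hF]
        rw [hUmul h g, mul_inv_rev, hUmul g⁻¹ h⁻¹]
        simp only [mul_assoc]
      calc U h * S * U h⁻¹
          = (ContinuousLinearMap.mulLeftRight ℂ (H →L[ℂ] H) (U h) (U h⁻¹)) S := rfl
        _ = ∫ g, (ContinuousLinearMap.mulLeftRight ℂ (H →L[ℂ] H) (U h) (U h⁻¹)) (F g) ∂μ :=
            h2.symm
        _ = ∫ g, F (h * g) ∂μ := by
            refine integral_congr_ae (Filter.Eventually.of_forall fun g => ?_)
            simpa using h3 g
        _ = ∫ g, F g ∂μ := by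
            exact integral_mul_left_eq_self F h
        _ = S := rfl
    calc U h * S = U h * S * (U h⁻¹ * U h) := by rw [hUginvg, mul_one]
      _ = (U h * S * U h⁻¹) * U h := by rw [mul_assoc, mul_assoc, mul_assoc]
      _ = S * U h := by rw [h1]
  -- Schur: S is a scalar
  haveI : Nontrivial H := nontrivial_of_ne v 0 hv0
  obtain ⟨c, hc⟩ := Module.End.exists_eigenvalue ((S : H →L[ℂ] H) : H →ₗ[ℂ] H)
  set W : Submodule ℂ H := Module.End.eigenspace ((S : H →L[ℂ] H) : H →ₗ[ℂ] H) c with hW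
  have hWinv : ∀ g : G, ∀ x ∈ W, (π g : H →L[ℂ] H) x ∈ W := by
    intro g x hx
    rw [hW, Module.End.mem_eigenspace_iff] at hx ⊢
    have h1 : S ((π g : H →L[ℂ] H) x) = (π g : H →L[ℂ] H) (S x) := by
      have := congrArg (fun T : H →L[ℂ] H => T x) (hcomm g)
      simpa [ContinuousLinearMap.mul_apply] using this.symm
    show S ((π g : H →L[ℂ] H) x) = c • (π g : H →L[ℂ] H) x
    rw [h1]
    have : S x = c • x := hx
    rw [this, _root_.map_smul]
  have hSc : ∀ x : H, S x = c • x := by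
    rcases hirr W hWinv with hbot | htop
    · exact absurd hbot hc
    · intro x
      have hxW : x ∈ W := htop ▸ Submodule.mem_top
      rw [hW, Module.End.mem_eigenspace_iff] at hxW
      exact hxW
  -- the zero part
  have hvw0 : ⟪v, S w⟫_ℂ = 0 := by
    have hinteg : ∀ g : G, ⟪v, F g w⟫_ℂ = 0 := by
      intro g
      have h1 : F g w = U g (P (U g⁻¹ w)) := by
        simp [hF, ContinuousLinearMap.mul_apply]
      calc ⟪v, F g w⟫_ℂ = ⟪U g (U g⁻¹ v), U g (P (U g⁻¹ w))⟫_ℂ := by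
            rw [h1, hUcancel]
        _ = ⟪U g⁻¹ v, P (U g⁻¹ w)⟫_ℂ := hUinner g _ _
        _ = 0 := hkey g
    rw [hSapp]
    simp only [hinteg]
    exact integral_zero _ _
  -- the positivity part
  set ρ : G → ℝ := fun g => Complex.re ⟪v, F g v⟫_ℂ with hρ
  have hρeq : ∀ g : G, ⟪v, F g v⟫_ℂ = (ρ g : ℂ) ∧ 0 < ρ g := by
    intro g
    obtain ⟨r, hr0, hr⟩ := hPpos (U g⁻¹ v) (hUna g v hv0)
    have h2 : F g v = U g (P (U g⁻¹ v)) := by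
      simp [hF, ContinuousLinearMap.mul_apply]
    have h1 : ⟪v, F g v⟫_ℂ = ⟪U g⁻¹ v, P (U g⁻¹ v)⟫_ℂ := by
      calc ⟪v, F g v⟫_ℂ = ⟪U g (U g⁻¹ v), U g (P (U g⁻¹ v))⟫_ℂ := by
            rw [h2, hUcancel]
        _ = _ := hUinner g _ _
    have h3 : ⟪v, F g v⟫_ℂ = (r : ℂ) := h1.trans hr
    have h4 : ρ g = r := by rw [hρ]; simp [h3]
    exact ⟨by rw [h3, h4], by rw [h4]; exact hr0⟩
  have hρcont : Continuous ρ := by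
    have h1 : Continuous fun g => ⟪v, F g v⟫_ℂ :=
      ((innerSL ℂ v).comp (ContinuousLinearMap.apply ℂ H v)).continuous.comp hFcont
    exact Complex.continuous_re.comp h1
  have hρint : Integrable ρ μ :=
    hρcont.integrable_of_hasCompactSupport (HasCompactSupport.of_compactSpace ρ)
  have hρpos : 0 < ∫ g, ρ g ∂μ := by
    obtain ⟨g₀, -, hg₀⟩ := isCompact_univ.exists_isMinOn Set.univ_nonempty hρcont.continuousOn
    have hε : 0 < ρ g₀ := (hρeq g₀).2
    have hle : ∀ g, ρ g₀ ≤ ρ g := fun g => hg₀ (Set.mem_univ g)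
    have h1 : (0:ℝ) < (μ Set.univ).toReal := by
      refine ENNReal.toReal_pos ?_ (measure_ne_top μ _)
      exact (isOpen_univ.measure_pos μ Set.univ_nonempty).ne'
    have h2 : (μ Set.univ).toReal * ρ g₀ ≤ ∫ g, ρ g ∂μ := by
      have := integral_mono (integrable_const (ρ g₀)) hρint hle
      rwa [integral_const, smul_eq_mul] at this
    exact lt_of_lt_of_le (by positivity) h2
  have hSvv : ⟪v, S v⟫_ℂ = ((∫ g, ρ g ∂μ : ℝ) : ℂ) := by
    rw [hSapp]
    rw [integral_congr_ae (Filter.Eventually.of_forall fun g => (hρeq g).1)]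
    exact integral_ofReal
  -- conclude
  have hc0 : c ≠ 0 := by
    intro hc0
    have h1 : ⟪v, S v⟫_ℂ = 0 := by
      rw [hSc v, hc0, inner_smul_right]; simp
    rw [hSvv] at h1
    exact (ne_of_gt hρpos) (by exact_mod_cast h1)
  have h2 : c * ⟪v, w⟫_ℂ = 0 := by
    rw [← inner_smul_right, ← hSc w]
    exact hvw0
  rcases mul_eq_zero.mp h2 with h | h
  · exact absurd h hc0
  · exact h
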